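/- Let K ⊆ ℝ³ be a closed set, let p ∉ K, let E be the path component of p in ℝ³ \ K, let M' be the set of points of K reachable from p (the outer hull of K relative to p), and let O = E ∪ M'. Then the topological frontier of O is contained in K. In other words, the solid outer hull (defined as the boundary of O) is a subset of the polyhedron |K| itself. -/

import Mathlib

/-- `q` is reachable from `p` with respect to `K`: there is a continuous path from
`p` to `q` all of whose points lying in `K` equal `q`. -/
def ReachableFrom (K : Set (EuclideanSpace ℝ (Fin 3))) (p q : EuclideanSpace ℝ (Fin 3)) : Prop :=
  ∃ γ : Path p q, ∀ t : unitInterval, γ t ∈ K → γ t = q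

/-- Let `K ⊆ ℝ³` be closed, `p ∉ K`, `E` the path component of `p` in `Kᶜ`, `M'`
the outer hull of `K` relative to `p` (the points of `K` reachable from `p`), and
`O = E ∪ M'`. Then the topological frontier of `O` is contained in `K`: the solid
outer hull (the boundary of `O`) is a subset of the polyhedron itself. -/
theorem solid_outer_hull_subset (K : Set (EuclideanSpace ℝ (Fin 3))) (hK : IsClosed K)
    (p : EuclideanSpace ℝ (Fin 3)) (hp : p ∉ K) :
    frontier (pathComponentIn Kᶜ p ∪ {q ∈ K | ReachableFrom K p q}) ⊆ K := by
  intro x hx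
  by_contra hxK
  obtain ⟨ε, hε, hball⟩ := Metric.isOpen_iff.mp hK.isOpen_compl x hxK
  have hxc := hx.1
  obtain ⟨y, hy, hd⟩ := Metric.mem_closure_iff.mp hxc ε hε
  have hyb : y ∈ Metric.ball x ε := Metric.mem_ball'.mpr hd
  have hyE : y ∈ pathComponentIn Kᶜ p := by
    rcases hy with h | h
    · exact h
    · exact absurd (hball hyb) (by simp [h.1])
  have hconn : IsPathConnected (Metric.ball x ε) :=
    (convex_ball x ε).isPathConnected ⟨x, Metric.mem_ball_self hε⟩
  have hxE : x ∈ pathComponentIn Kᶜ p := by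
    have hsub : Metric.ball x ε ⊆ pathComponentIn Kᶜ y :=
      hconn.subset_pathComponentIn hyb hball
    have hx' := hsub (Metric.mem_ball_self hε)
    rwa [pathComponentIn_congr hyE] at hx'
  have hopen : IsOpen (pathComponentIn Kᶜ p) := hK.isOpen_compl.pathComponentIn p
  have : x ∈ interior (pathComponentIn Kᶜ p ∪ {q ∈ K | ReachableFrom K p q}) :=
    interior_mono Set.subset_union_left (by rwa [hopen.interior_eq])
  exact hx.2 this
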